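/- Let H be a bipartite graph with bipartition (A, B). If |N(X)| ≥ |X| + 1 for every nonempty subset X ⊆ A, where N(X) denotes the set of vertices of B adjacent to some vertex of X, then the reconfiguration graph RG_Mat(H, A) on matchings of size |A| is connected. -/

import Mathlib

/-- `M` is a matching of the bipartite graph with edge set `E ⊆ α × β`: a set of edges
that pairwise share no endpoint. -/
def BGMatching {α β : Type*} (E M : Finset (α × β)) : Prop :=
  M ⊆ E ∧ ∀ e ∈ M, ∀ f ∈ M, e ≠ f → e.1 ≠ f.1 ∧ e.2 ≠ f.2

/-- Adjacency in the reconfiguration graph `RG_Mat(H, A; k)` of a bipartite graph: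
two matchings of size `k` are adjacent if their symmetric difference consists of
exactly two edges with distinct endpoints on the `B`-side. -/
def BGMatAdj {α β : Type*} [DecidableEq α] [DecidableEq β]
    (E : Finset (α × β)) (k : ℕ) (M M' : Finset (α × β)) : Prop :=
  BGMatching E M ∧ BGMatching E M' ∧ M.card = k ∧ M'.card = k ∧
    ∃ e f : α × β, M \ M' = {e} ∧ M' \ M = {f} ∧ e.2 ≠ f.2

open Finset Function

set_option linter.unusedSectionVars false

namespace Stmt12

variable {α β : Type*} [Fintype α] [DecidableEq α] [Fintype β] [DecidableEq β]

def Valid (E : Finset (α × β)) (f : α → β) : Prop :=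
  Function.Injective f ∧ ∀ a, (a, f a) ∈ E

def Mof (f : α → β) : Finset (α × β) := Finset.univ.image fun a => (a, f a)

lemma mem_Mof {f : α → β} {e : α × β} : e ∈ Mof f ↔ e.2 = f e.1 := by
  constructor
  · rintro h
    simp only [Mof, Finset.mem_image] at h
    obtain ⟨a, -, rfl⟩ := h
    rfl
  · intro h
    simp only [Mof, Finset.mem_image]
    exact ⟨e.1, Finset.mem_univ _, by rw [← h]⟩

lemma card_Mof (f : α → β) : (Mof f).card = Fintype.card α := by
  rw [Mof, Finset.card_image_of_injective _ (fun a b h => (Prod.mk.injEq _ _ _ _ ▸ h).1),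
    Finset.card_univ]

lemma matching_Mof {E : Finset (α × β)} {f : α → β} (hf : Valid E f) :
    BGMatching E (Mof f) := by
  constructor
  · intro e he
    rw [mem_Mof] at he
    have : e = (e.1, f e.1) := Prod.ext rfl he
    rw [this]; exact hf.2 e.1
  · intro e he e' he' hne
    rw [mem_Mof] at he he'
    constructor
    · intro h1
      exact hne (Prod.ext h1 (by rw [he, he', h1]))
    · intro h2
      have : e.1 = e'.1 := hf.1 (by rw [← he, ← he', h2])
      exact hne (Prod.ext this h2)

/-- Extract a function from a matching covering all of `α`. -/
lemma matching_to_fn {E M : Finset (α × β)} (hM : BGMatching E M)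
    (hc : M.card = Fintype.card α) : ∃ f : α → β, Valid E f ∧ M = Mof f := by
  classical
  have hfstinj : Function.Injective (fun e : M => (e : α × β).1) := by
    rintro ⟨e, he⟩ ⟨e', he'⟩ h
    simp only [Subtype.mk.injEq]
    by_contra hne
    exact (hM.2 e he e' he' hne).1 h
  have hcard : Fintype.card M = Fintype.card α := by
    rw [Fintype.card_coe, hc]
  have hbij : Function.Bijective (fun e : M => (e : α × β).1) :=
    (Fintype.bijective_iff_injective_and_card _).2 ⟨hfstinj, hcard⟩
  set g := (Equiv.ofBijective _ hbij).symm with hg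
  refine ⟨fun a => ((g a : M) : α × β).2, ⟨?_, ?_⟩, ?_⟩
  · intro a a' h
    have h1 : ((g a : M) : α × β).1 = a := (Equiv.ofBijective _ hbij).apply_symm_apply a
    have h2 : ((g a' : M) : α × β).1 = a' := (Equiv.ofBijective _ hbij).apply_symm_apply a'
    by_contra hne
    have hnepair : ((g a : M) : α × β) ≠ ((g a' : M) : α × β) := by
      intro hEq; rw [← h1, ← h2, hEq] at hne; exact hne rfl
    exact (hM.2 _ (g a).2 _ (g a').2 hnepair).2 h
  · intro a
    have h1 : ((g a : M) : α × β).1 = a := (Equiv.ofBijective _ hbij).apply_symm_apply a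
    have : (a, ((g a : M) : α × β).2) = ((g a : M) : α × β) := Prod.ext h1.symm rfl
    rw [this]
    exact hM.1 (g a).2
  · refine (Finset.eq_of_subset_of_card_le ?_ ?_).symm
    · intro e he
      rw [mem_Mof] at he
      have h1 : ((g e.1 : M) : α × β).1 = e.1 := (Equiv.ofBijective _ hbij).apply_symm_apply e.1
      have : e = ((g e.1 : M) : α × β) := Prod.ext h1.symm he
      rw [this]; exact (g e.1).2
    · rw [card_Mof, hc]


def Rel (E : Finset (α × β)) (f g : α → β) : Prop :=
  Relation.ReflTransGen (BGMatAdj E (Fintype.card α)) (Mof f) (Mof g)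

lemma Rel.refl {E : Finset (α × β)} (f : α → β) : Rel E f f := Relation.ReflTransGen.refl

lemma Rel.trans {E : Finset (α × β)} {f g h : α → β} (h1 : Rel E f g) (h2 : Rel E g h) :
    Rel E f h := Relation.ReflTransGen.trans h1 h2

lemma BGMatAdj_symm {E : Finset (α × β)} {k : ℕ} : Symmetric (BGMatAdj E k) := by
  rintro M M' ⟨h1, h2, h3, h4, e, f, h5, h6, h7⟩
  exact ⟨h2, h1, h4, h3, f, e, h6, h5, h7.symm⟩

lemma Rel.symm {E : Finset (α × β)} {f g : α → β} (h : Rel E f g) : Rel E g f :=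
  (@Relation.ReflTransGen.symmetric _ _ ⟨fun _ _ h => BGMatAdj_symm h⟩).symm _ _ h

/-- validity of a single update to a free vertex -/
lemma Valid.update {E : Finset (α × β)} {f : α → β} (hf : Valid E f) {a : α} {b : β}
    (hb : b ∉ Set.range f) (he : (a, b) ∈ E) : Valid E (Function.update f a b) := by
  constructor
  · have key : ∀ y, y ≠ a → Function.update f a b y ≠ b := by
      intro y hy h
      rw [Function.update_of_ne hy] at h
      exact hb ⟨y, h⟩
    intro x y hxy
    rcases eq_or_ne x a with rfl | hx
    · rcases eq_or_ne y x with rfl | hy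
      · rfl
      · rw [Function.update_self] at hxy
        exact absurd hxy.symm (key y hy)
    · rcases eq_or_ne y a with rfl | hy
      · rw [Function.update_self] at hxy
        exact absurd hxy (key x hx)
      · rw [Function.update_of_ne hx, Function.update_of_ne hy] at hxy
        exact hf.1 hxy
  · intro x
    rcases eq_or_ne x a with rfl | hx
    · rwa [Function.update_self]
    · rw [Function.update_of_ne hx]; exact hf.2 x

/-- a single move in the reconfiguration graph -/
lemma step {E : Finset (α × β)} {f : α → β} (hf : Valid E f) {a : α} {b : β}
    (hb : b ∉ Set.range f) (he : (a, b) ∈ E) :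
    Rel E f (Function.update f a b) := by
  have hf' : Valid E (Function.update f a b) := hf.update hb he
  have hba : b ≠ f a := fun h => hb ⟨a, h.symm⟩
  refine Relation.ReflTransGen.single ⟨matching_Mof hf, matching_Mof hf', card_Mof f,
    card_Mof _, (a, f a), (a, b), ?_, ?_, hba.symm⟩
  · ext e
    simp only [Finset.mem_sdiff, mem_Mof, Finset.mem_singleton]
    constructor
    · rintro ⟨h1, h2⟩
      rcases eq_or_ne e.1 a with h3 | h3
      · exact Prod.ext h3 (by rw [h1, h3])
      · exact absurd (by rw [Function.update_of_ne h3, ← h1]) h2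
    · rintro rfl
      refine ⟨rfl, ?_⟩
      simp only [Function.update_self]
      exact fun h => hba h.symm
  · ext e
    simp only [Finset.mem_sdiff, mem_Mof, Finset.mem_singleton]
    constructor
    · rintro ⟨h1, h2⟩
      rcases eq_or_ne e.1 a with h3 | h3
      · rw [h3, Function.update_self] at h1
        exact Prod.ext h3 h1
      · rw [Function.update_of_ne h3] at h1
        exact absurd h1 h2
    · rintro rfl
      simp only [Function.update_self]
      exact ⟨trivial, hba⟩


section chains

variable {E : Finset (α × β)}

/-- An alternating chain: `b` is a vertex (to be freed), the list records the α-vertices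
to be shifted; the chain bottoms out at a vertex adjacent to `S`. -/
inductive ListChain (E : Finset (α × β)) (F : α → β) (S : Finset α) : β → List α → Prop
  | nil (b : β) : (∃ a ∈ S, (a, b) ∈ E) → ListChain E F S b []
  | cons (b : β) (c : α) (l : List α) : c ∉ S → (c, b) ∈ E →
      ListChain E F S (F c) l → ListChain E F S b (c :: l)

lemma ListChain.not_mem_S {F : α → β} {S : Finset α} {b : β} {l : List α}
    (h : ListChain E F S b l) : ∀ x ∈ l, x ∉ S := by
  induction h with
  | nil b hb => intro x hx; exact absurd hx List.not_mem_nil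
  | cons b c l hcS hcb hch ih =>
    intro x hx
    rcases List.mem_cons.1 hx with rfl | hx
    · exact hcS
    · exact ih x hx

lemma ListChain.congr {F G : α → β} {S : Finset α} {b : β} {l : List α}
    (h : ListChain E F S b l) (hFG : ∀ x ∈ l, F x = G x) : ListChain E G S b l := by
  induction h with
  | nil b hb => exact .nil b hb
  | cons b c l hcS hcb hch ih =>
    have := ih (fun x hx => hFG x (List.mem_cons_of_mem _ hx))
    rw [hFG c (List.mem_cons_self)] at this
    exact .cons b c l hcS hcb this

lemma ListChain.suffix {F : α → β} {S : Finset α} {b : β} {l : List α}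
    (h : ListChain E F S b l) (hnd : l.Nodup) {c : α} (hc : c ∈ l) :
    ∃ v, ListChain E F S (F c) v ∧ v.Nodup ∧ c ∉ v := by
  induction h with
  | nil b hb => exact absurd hc List.not_mem_nil
  | cons b c' l hcS hcb hch ih =>
    rcases List.mem_cons.1 hc with rfl | hc
    · exact ⟨l, hch, (List.nodup_cons.1 hnd).2, (List.nodup_cons.1 hnd).1⟩
    · exact ih (List.nodup_cons.1 hnd).2 hc

/-- Key existence lemma: under the surplus Hall condition, there is a free vertex with a
nodup alternating chain down to `S`. -/
lemma chain_exists
    (hHall : ∀ X : Finset α, X.Nonempty →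
      X.card + 1 ≤ ((E.filter fun e => e.1 ∈ X).image Prod.snd).card)
    {F : α → β} (hF : Valid E F) {S : Finset α} (hS : S.Nonempty) :
    ∃ b l, b ∉ Set.range F ∧ ListChain E F S b l ∧ l.Nodup := by
  classical
  by_contra hcon
  push_neg at hcon
  set Z : Finset α :=
    S ∪ Finset.univ.filter
      (fun c => c ∉ S ∧ ∃ l, ListChain E F S (F c) l ∧ l.Nodup ∧ c ∉ l) with hZ
  have hSZ : S ⊆ Z := Finset.subset_union_left
  have hZne : Z.Nonempty := hS.mono hSZ
  -- every neighbour of Z is matched into Z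
  have hNZ : ((E.filter fun e => e.1 ∈ Z).image Prod.snd) ⊆ Z.image F := by
    intro b hb
    simp only [Finset.mem_image, Finset.mem_filter] at hb
    obtain ⟨e, ⟨heE, heZ⟩, rfl⟩ := hb
    -- a nodup chain for e.2
    have hchain : ∃ l, ListChain E F S e.2 l ∧ l.Nodup := by
      rcases Finset.mem_union.1 heZ with hxS | hxF
      · exact ⟨[], .nil _ ⟨e.1, hxS, by rw [← Prod.mk.eta (p := e)] at heE; exact heE⟩,
          List.nodup_nil⟩
      · simp only [Finset.mem_filter] at hxF
        obtain ⟨-, hxS, lx, hlx, hnd, hxlx⟩ := hxF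
        refine ⟨e.1 :: lx, .cons _ _ _ hxS (by rw [← Prod.mk.eta (p := e)] at heE; exact heE)
          hlx, List.nodup_cons.2 ⟨hxlx, hnd⟩⟩
    obtain ⟨l, hl, hnd⟩ := hchain
    by_cases hbr : e.2 ∈ Set.range F
    · obtain ⟨c, hc⟩ := hbr
      rw [← hc] at hl
      refine Finset.mem_image.2 ⟨c, ?_, hc⟩
      by_cases hcS : c ∈ S
      · exact hSZ hcS
      by_cases hcl : c ∈ l
      · obtain ⟨v, hv, hvnd, hcv⟩ := hl.suffix hnd hcl
        exact Finset.mem_union_right _ (Finset.mem_filter.2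
          ⟨Finset.mem_univ _, hcS, v, hv, hvnd, hcv⟩)
      · exact Finset.mem_union_right _ (Finset.mem_filter.2
          ⟨Finset.mem_univ _, hcS, l, hl, hnd, hcl⟩)
    · exact absurd hnd (hcon e.2 l hbr hl)
  have h1 := hHall Z hZne
  have h2 : ((E.filter fun e => e.1 ∈ Z).image Prod.snd).card ≤ Z.card := by
    calc ((E.filter fun e => e.1 ∈ Z).image Prod.snd).card ≤ (Z.image F).card :=
          Finset.card_le_card hNZ
      _ = Z.card := Finset.card_image_of_injective _ hF.1
  omega

end chains

section shift

variable {E : Finset (α × β)}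

/-- Shift along a chain: the head moves to `b`, each later vertex moves to the spot vacated
by the previous one. -/
def shift (F : α → β) (b : β) : List α → (α → β)
  | [] => F
  | c :: l => shift (Function.update F c b) (F c) l

/-- The spot that ends up free after shifting. -/
def lastv (F : α → β) (b : β) : List α → β
  | [] => b
  | c :: l => lastv F (F c) l

lemma shift_off : ∀ (l : List α) (F : α → β) (b : β) (a : α), a ∉ l → shift F b l a = F a := by
  intro l
  induction l with
  | nil => intro F b a _; rfl
  | cons c l ih =>
    intro F b a ha
    have hac : a ≠ c := fun h => ha (h ▸ List.mem_cons_self)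
    rw [shift, ih _ _ a (fun h => ha (List.mem_cons_of_mem _ h)), Function.update_of_ne hac]

lemma shift_congr : ∀ (l : List α) (F G : α → β) (b : β), l.Nodup →
    (∀ x ∈ l, F x = G x) → ∀ a ∈ l, shift F b l a = shift G b l a := by
  intro l
  induction l with
  | nil => intro F G b _ _ a ha; exact absurd ha List.not_mem_nil
  | cons c l ih =>
    intro F G b hnd hFG a ha
    obtain ⟨hcl, hndl⟩ := List.nodup_cons.1 hnd
    rcases List.mem_cons.1 ha with rfl | ha
    · rw [shift, shift, shift_off _ _ _ _ hcl, shift_off _ _ _ _ hcl,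
        Function.update_self, Function.update_self]
    · rw [shift, shift, hFG c (List.mem_cons_self)]
      exact ih _ _ _ hndl (fun x hx => by
        have hxc : x ≠ c := fun h => hcl (h ▸ hx)
        rw [Function.update_of_ne hxc, Function.update_of_ne hxc]
        exact hFG x (List.mem_cons_of_mem _ hx)) a ha

lemma lastv_congr : ∀ (l : List α) (F G : α → β) (b : β),
    (∀ x ∈ l, F x = G x) → lastv F b l = lastv G b l := by
  intro l
  induction l with
  | nil => intro F G b _; rfl
  | cons c l ih =>
    intro F G b hFG
    rw [lastv, lastv, hFG c (List.mem_cons_self)]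
    exact ih _ _ _ (fun x hx => hFG x (List.mem_cons_of_mem _ hx))

lemma lastv_mem : ∀ (l : List α) (F : α → β) (b : β),
    lastv F b l = b ∨ ∃ x ∈ l, lastv F b l = F x := by
  intro l
  induction l with
  | nil => intro F b; exact Or.inl rfl
  | cons c l ih =>
    intro F b
    rcases ih F (F c) with h | ⟨x, hx, h⟩
    · exact Or.inr ⟨c, List.mem_cons_self, h⟩
    · exact Or.inr ⟨x, List.mem_cons_of_mem _ hx, h⟩

lemma lastv_adj {F : α → β} {S : Finset α} {b : β} {l : List α}
    (h : ListChain E F S b l) : ∃ a ∈ S, (a, lastv F b l) ∈ E := by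
  induction h with
  | nil b hb => exact hb
  | cons b c l hcS hcb hch ih => exact ih

end shift


section specmain

variable {E : Finset (α × β)}

lemma shift_spec {S : Finset α} : ∀ (l : List α) (F : α → β) (b : β), Valid E F →
    b ∉ Set.range F → ListChain E F S b l → l.Nodup →
    Valid E (shift F b l) ∧ Rel E F (shift F b l) ∧
      Set.range (shift F b l) = insert b (Set.range F) \ {lastv F b l} := by
  intro l
  induction l with
  | nil =>
    intro F b hF hb _ _
    refine ⟨hF, Rel.refl F, ?_⟩
    rw [shift, lastv]
    ext y
    simp only [Set.mem_diff, Set.mem_insert_iff, Set.mem_singleton_iff]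
    constructor
    · intro hy
      exact ⟨Or.inr hy, fun h => hb (h ▸ hy)⟩
    · rintro ⟨hy | hy, hyb⟩
      · exact absurd hy hyb
      · exact hy
  | cons c l ih =>
    intro F b hF hb hch hnd
    obtain ⟨hcl, hndl⟩ := List.nodup_cons.1 hnd
    rcases hch with _ | ⟨_, _, _, hcS, hcb, hch'⟩
    set F' := Function.update F c b with hF'def
    have hF' : Valid E F' := hF.update hb hcb
    have hFcb : F c ≠ b := fun h => hb ⟨c, h⟩
    have hrangeF' : Set.range F' = insert b (Set.range F) \ {F c} := by
      ext y
      simp only [Set.mem_diff, Set.mem_insert_iff, Set.mem_singleton_iff, Set.mem_range]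
      constructor
      · rintro ⟨x, rfl⟩
        rcases eq_or_ne x c with rfl | hxc
        · rw [hF'def, Function.update_self]
          exact ⟨Or.inl rfl, fun h => hFcb h.symm⟩
        · rw [hF'def, Function.update_of_ne hxc]
          exact ⟨Or.inr ⟨x, rfl⟩, fun h => hxc (hF.1 h)⟩
      · rintro ⟨hy | ⟨x, rfl⟩, hyc⟩
        · exact ⟨c, by rw [hy, hF'def, Function.update_self]⟩
        · have hxc : x ≠ c := fun h => hyc (h ▸ rfl)
          exact ⟨x, by rw [hF'def, Function.update_of_ne hxc]⟩
    have hFcfree : F c ∉ Set.range F' := by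
      rw [hrangeF']
      simp
    have hch'' : ListChain E F' S (F c) l :=
      hch'.congr (fun x hx => (Function.update_of_ne (by rintro rfl; exact hcl hx) b F).symm)
    obtain ⟨hV, hR, hRange⟩ := ih F' (F c) hF' hFcfree hch'' hndl
    have hshift : shift F b (c :: l) = shift F' (F c) l := rfl
    have hlastv : lastv F b (c :: l) = lastv F' (F c) l := by
      rw [lastv]
      exact lastv_congr l F F' (F c)
        (fun x hx => (Function.update_of_ne (by rintro rfl; exact hcl hx) b F).symm)
    refine ⟨hV, (step hF hb hcb).trans hR, ?_⟩
    show Set.range (shift F' (F c) l) = _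
    rw [hRange, hrangeF', hlastv]
    congr 1
    rw [Set.insert_diff_singleton, Set.insert_comm]
    congr 1
    exact Set.insert_eq_self.2 ⟨c, rfl⟩

/-- The main lemma: any two valid functions are connected, by strong induction on the
number of disagreements. -/
lemma main
    (hHall : ∀ X : Finset α, X.Nonempty →
      X.card + 1 ≤ ((E.filter fun e => e.1 ∈ X).image Prod.snd).card) :
    ∀ (n : ℕ) (f g : α → β), Valid E f → Valid E g →
      (Finset.univ.filter fun a => f a ≠ g a).card ≤ n → Rel E f g := by
  intro n
  induction n with
  | zero =>
    intro f g hf hg hcard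
    have : ∀ a, f a = g a := by
      intro a
      by_contra h
      have : a ∈ Finset.univ.filter fun a => f a ≠ g a := Finset.mem_filter.2 ⟨Finset.mem_univ _, h⟩
      have := Finset.card_pos.2 ⟨a, this⟩
      omega
    rw [funext this]
    exact Rel.refl g
  | succ n ih =>
    intro f g hf hg hcard
    set D := Finset.univ.filter fun a => f a ≠ g a with hD
    rcases Finset.eq_empty_or_nonempty D with hDe | hDne
    · exact ih f g hf hg (by rw [← hD, hDe]; simp)
    have hsub : ∀ (f' g' : α → β) (w : α), w ∈ D →
        ((Finset.univ.filter fun a => f' a ≠ g' a) ⊆ D.erase w) →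
        (Finset.univ.filter fun a => f' a ≠ g' a).card ≤ n := by
      intro f' g' w hw hss
      have := Finset.card_le_card hss
      have := Finset.card_erase_of_mem hw
      omega
    by_cases hc1 : ∃ w, f w ≠ g w ∧ g w ∉ Set.range f
    · obtain ⟨w, hw1, hw2⟩ := hc1
      have hwD : w ∈ D := Finset.mem_filter.2 ⟨Finset.mem_univ _, hw1⟩
      have hstep := step hf hw2 (hg.2 w)
      refine hstep.trans (ih _ g (hf.update hw2 (hg.2 w)) hg (hsub _ g w hwD ?_))
      intro a ha
      simp only [Finset.mem_filter, Finset.mem_univ, true_and] at ha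
      have haw : a ≠ w := by
        rintro rfl
        rw [Function.update_self] at ha
        exact ha rfl
      rw [Function.update_of_ne haw] at ha
      exact Finset.mem_erase.2 ⟨haw, Finset.mem_filter.2 ⟨Finset.mem_univ _, ha⟩⟩
    by_cases hc2 : ∃ w, f w ≠ g w ∧ f w ∉ Set.range g
    · obtain ⟨w, hw1, hw2⟩ := hc2
      have hwD : w ∈ D := Finset.mem_filter.2 ⟨Finset.mem_univ _, hw1⟩
      have hstep := step hg hw2 (hf.2 w)
      refine Rel.trans (ih f _ hf (hg.update hw2 (hf.2 w)) (hsub f _ w hwD ?_)) hstep.symm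
      intro a ha
      simp only [Finset.mem_filter, Finset.mem_univ, true_and] at ha
      have haw : a ≠ w := by
        rintro rfl
        rw [Function.update_self] at ha
        exact ha rfl
      rw [Function.update_of_ne haw] at ha
      exact Finset.mem_erase.2 ⟨haw, Finset.mem_filter.2 ⟨Finset.mem_univ _, ha⟩⟩
    -- Case 2: ranges are equal, pure permutation of disagreements
    push_neg at hc1 hc2
    have hrange : Set.range f = Set.range g := by
      ext y
      constructor
      · rintro ⟨x, rfl⟩
        by_cases h : f x = g x
        · exact ⟨x, h.symm⟩
        · exact hc2 x h
      · rintro ⟨x, rfl⟩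
        by_cases h : f x = g x
        · exact ⟨x, h⟩
        · exact hc1 x h
    obtain ⟨b, l, hbfree, hchain, hnd⟩ := chain_exists hHall hf hDne
    have hentries : ∀ x ∈ l, f x = g x := by
      intro x hx
      have := hchain.not_mem_S x hx
      rw [hD] at this
      simp only [Finset.mem_filter, Finset.mem_univ, true_and, not_not] at this
      exact this
    have hchain_g : ListChain E g D b l := hchain.congr hentries
    have hbfree_g : b ∉ Set.range g := hrange ▸ hbfree
    obtain ⟨hVF, hRF, hRangeF⟩ := shift_spec l f b hf hbfree hchain hnd
    obtain ⟨hVG, hRG, hRangeG⟩ := shift_spec l g b hg hbfree_g hchain_g hnd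
    set hF := shift f b l with hhF
    set hG := shift g b l with hhG
    set s := lastv f b l with hs
    have hsg : lastv g b l = s := (lastv_congr l f g b hentries).symm
    have hsF : s ∉ Set.range hF := by rw [hRangeF]; simp
    have hsG : s ∉ Set.range hG := by rw [hRangeG, hsg]; simp
    obtain ⟨astar, hastarD, hastarE⟩ := lastv_adj hchain
    have hastarl : astar ∉ l := fun h => hchain.not_mem_S astar h hastarD
    have hFa : hF astar = f astar := shift_off l f b astar hastarl
    have hGa : hG astar = g astar := shift_off l g b astar hastarl
    have hfga : f astar ≠ g astar := by
      rw [hD] at hastarD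
      exact (Finset.mem_filter.1 hastarD).2
    -- the disagreement set of (hF, hG) is exactly D
    have hDiff : ∀ a, (hF a ≠ hG a ↔ a ∈ D) := by
      intro a
      by_cases hal : a ∈ l
      · have h1 : hF a = hG a := shift_congr l f g b hnd hentries a hal
        have h2 : a ∉ D := fun h => hchain.not_mem_S a hal h
        simp [h1, h2]
      · rw [hhF, hhG, shift_off l f b a hal, shift_off l g b a hal, hD]
        simp
    -- first move: astar goes to the free spot s
    set F1 := Function.update hF astar s with hF1
    have hVF1 : Valid E F1 := hVF.update hsF hastarE
    have hRF1 : Rel E hF F1 := step hVF hsF hastarE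
    -- find the pivot w'
    have hfs : f astar ≠ s := by
      rcases lastv_mem l f b with h | ⟨x, hx, h⟩
      · rw [hs, h]; exact fun hh => hbfree ⟨astar, hh⟩
      · rw [hs, h]
        exact fun hh => hastarl (hf.1 hh ▸ hx)
    have hfaG : f astar ∈ Set.range hG := by
      rw [hRangeG, hsg]
      refine ⟨Set.mem_insert_iff.2 (Or.inr ?_), hfs⟩
      rw [← hrange]; exact ⟨astar, rfl⟩
    obtain ⟨w', hw'⟩ := hfaG
    have hw'astar : w' ≠ astar := by
      rintro rfl
      rw [hGa] at hw'
      exact hfga hw'.symm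
    have hw'D : w' ∈ D := by
      rw [← hDiff w']
      rw [hw']
      intro h
      have : hF w' = hF astar := by rw [h, hFa]
      exact hw'astar (hVF.1 this)
    have hGw'free : hG w' ∉ Set.range F1 := by
      rw [hw']
      rintro ⟨y, hy⟩
      rcases eq_or_ne y astar with rfl | hya
      · rw [hF1, Function.update_self] at hy
        exact hfs hy.symm
      · rw [hF1, Function.update_of_ne hya] at hy
        have : hF y = hF astar := by rw [hy, hFa]
        exact hya (hVF.1 this)
    -- second move: w' goes to hG w'
    have hRF2 : Rel E F1 (Function.update F1 w' (hG w')) := step hVF1 hGw'free (hVG.2 w')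
    set F2 := Function.update F1 w' (hG w') with hF2
    have hVF2 : Valid E F2 := hVF1.update hGw'free (hVG.2 w')
    -- measure decreased
    have hcardD : D.card ≤ n + 1 := hcard
    have hfinal : (Finset.univ.filter fun a => F2 a ≠ hG a).card ≤ n := by
      refine hsub F2 hG w' hw'D ?_
      intro a ha
      simp only [Finset.mem_filter, Finset.mem_univ, true_and] at ha
      have haw' : a ≠ w' := by
        rintro rfl
        rw [hF2, Function.update_self] at ha
        exact ha rfl
      rw [hF2, Function.update_of_ne haw'] at ha
      refine Finset.mem_erase.2 ⟨haw', ?_⟩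
      rcases eq_or_ne a astar with rfl | haa
      · exact (Finset.mem_filter.1 hastarD).2 |> fun _ => hastarD
      · rw [hF1, Function.update_of_ne haa] at ha
        exact (hDiff a).1 ha
    have hIH : Rel E F2 hG := ih F2 hG hVF2 hVG hfinal
    exact ((((hRF.trans hRF1).trans hRF2).trans hIH).trans hRG.symm)

end specmain

end Stmt12

/-- Reconfiguration version of Hall's theorem: if `|N(X)| ≥ |X| + 1` for every nonempty
`X ⊆ A`, then the reconfiguration graph on matchings covering `A` is connected. -/
theorem stmt_12 {α β : Type*} [Fintype α] [DecidableEq α] [Fintype β] [DecidableEq β]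
    (E : Finset (α × β))
    (hHall : ∀ X : Finset α, X.Nonempty →
      X.card + 1 ≤ ((E.filter fun e => e.1 ∈ X).image Prod.snd).card)
    (M M' : Finset (α × β))
    (hM : BGMatching E M) (hMcard : M.card = Fintype.card α)
    (hM' : BGMatching E M') (hM'card : M'.card = Fintype.card α) :
    Relation.ReflTransGen (BGMatAdj E (Fintype.card α)) M M' := by
  obtain ⟨f, hf, rfl⟩ := Stmt12.matching_to_fn hM hMcard
  obtain ⟨g, hg, rfl⟩ := Stmt12.matching_to_fn hM' hM'card
  exact Stmt12.main hHall (Finset.univ.filter fun a => f a ≠ g a).card f g hf hg le_rfl
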